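/- Fix real q with 0 < q < 1 and set p = 1-q. For integers m ≥ 0 and n with n ≥ m and n ≥ 1, the function g(w) = Σ_{h≥1} h·w·q^h·(w q^h)^m / ((1-w q^{h-1})(1-w q^h)) is well-defined and analytic for real w with |w| < 1, and its n-th Taylor coefficient at 0 (that is, the n-th iterated derivative of g at 0 divided by n!) equals (q/p)·(q^m - q^n)/(1-q^n)². -/

import Mathlib

open Finset

private lemma tck_aux1 (q : ℝ) (hq0 : 0 < q) (hq1 : q < 1) :
    Summable (fun h : ℕ => ((h : ℝ) + 1) * q ^ (h + 1)) := by
  have h1 : ‖q‖ < 1 := by rw [Real.norm_eq_abs, abs_of_pos hq0]; exact hq1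
  have h2 := summable_pow_mul_geometric_of_norm_lt_one (R := ℝ) 1 h1
  have h3 := (summable_nat_add_iff 1).2 h2
  simpa [pow_one] using h3

private lemma tck_absden (w q : ℝ) (hw : |w| < 1) (hq0 : 0 < q) (hq1 : q < 1) (j : ℕ) :
    1 - |w| ≤ |1 - w * q ^ j| := by
  have hql : q ^ j ≤ 1 := pow_le_one₀ hq0.le hq1.le
  have h1 : |w * q ^ j| ≤ |w| := by
    rw [abs_mul, abs_pow, abs_of_pos hq0]
    nlinarith [abs_nonneg w, pow_pos hq0 j]
  calc 1 - |w| ≤ 1 - |w * q ^ j| := by linarith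
    _ = |1| - |w * q ^ j| := by rw [abs_one]
    _ ≤ |1 - w * q ^ j| := abs_sub_abs_le_abs_sub 1 _

private lemma tck_absnum (w q : ℝ) (hw : |w| < 1) (hq0 : 0 < q) (hq1 : q < 1) (m h : ℕ) :
    |((h : ℝ) + 1) * w * q ^ (h + 1) * (w * q ^ (h + 1)) ^ m| ≤ ((h : ℝ) + 1) * q ^ (h + 1) := by
  have hwq : |w * q ^ (h + 1)| ≤ 1 := by
    rw [abs_mul, abs_pow, abs_of_pos hq0]
    nlinarith [abs_nonneg w, pow_le_one₀ hq0.le hq1.le (n := h + 1), pow_pos hq0 (h + 1)]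
  rw [abs_mul, abs_mul, abs_mul, abs_pow]
  have h1 : |((h : ℝ) + 1)| = (h : ℝ) + 1 := abs_of_nonneg (by positivity)
  have h2 : |q| = q := abs_of_pos hq0
  rw [h1, h2]
  have h3 : |(w * q ^ (h + 1)) ^ m| ≤ 1 := by rw [abs_pow]; exact pow_le_one₀ (abs_nonneg _) hwq
  have h4 : (0:ℝ) ≤ |(w * q ^ (h + 1)) ^ m| := abs_nonneg _
  calc (↑h + 1) * |w| * q ^ (h + 1) * |(w * q ^ (h + 1)) ^ m|
      ≤ (↑h + 1) * 1 * q ^ (h + 1) * 1 := by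
        gcongr <;> first | positivity | exact hw.le | exact h3
    _ = (↑h + 1) * q ^ (h + 1) := by ring

private lemma tck_summable (q : ℝ) (hq0 : 0 < q) (hq1 : q < 1) (m : ℕ) (w : ℝ) (hw : |w| < 1) :
    Summable (fun h : ℕ =>
      ((h + 1 : ℝ) * w * q ^ (h + 1) * (w * q ^ (h + 1)) ^ m) /
        ((1 - w * q ^ h) * (1 - w * q ^ (h + 1)))) := by
  have hw1 : 0 < 1 - |w| := by linarith [abs_nonneg w]
  apply Summable.of_norm_bounded
      (g := fun h : ℕ => (((h : ℝ) + 1) * q ^ (h + 1)) / ((1 - |w|) * (1 - |w|)))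
      ((tck_aux1 q hq0 hq1).div_const _)
  intro h
  rw [Real.norm_eq_abs, abs_div]
  apply div_le_div₀ (by positivity) (tck_absnum w q hw hq0 hq1 m h) (by positivity)
  rw [abs_mul]
  exact mul_le_mul (tck_absden w q hw hq0 hq1 h) (tck_absden w q hw hq0 hq1 (h + 1))
    hw1.le (abs_nonneg _)

set_option maxHeartbeats 1000000 in
private lemma tck_key (q : ℝ) (m : ℕ) (w : ℝ) (hq0 : 0 < q) (hq1 : q < 1) (hw : |w| < 1) :
    HasSum (fun K : ℕ =>
        (if K ≤ m then (0:ℝ) else q * (q ^ m - q ^ K) / ((1 - q) * (1 - q ^ K) ^ 2)) * w ^ K)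
      (∑' h : ℕ, ((h + 1 : ℝ) * w * q ^ (h + 1) * (w * q ^ (h + 1)) ^ m) /
        ((1 - w * q ^ h) * (1 - w * q ^ (h + 1)))) := by
  have hp0 : (0:ℝ) < 1 - q := by linarith
  have hw0 : (0:ℝ) ≤ |w| := abs_nonneg w
  have hw1 : (0:ℝ) < 1 - |w| := by linarith
  set c : ℕ → ℝ := fun K =>
    if K ≤ m then (0:ℝ) else q * (q ^ m - q ^ K) / ((1 - q) * (1 - q ^ K) ^ 2) with hc
  set G : ℕ → ℝ := fun k => ∑ j ∈ range (k + 1), q ^ j with hGdef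
  set u : ℕ → ℕ → ℝ := fun h k =>
    (((h : ℝ) + 1) * w * q ^ (h + 1) * (w * q ^ (h + 1)) ^ m) *
      (w ^ k * q ^ (h * k) * G k) with hudef
  -- geometric series facts
  have hqpow1 : ∀ j : ℕ, q ^ j ≤ 1 := fun j => pow_le_one₀ hq0.le hq1.le
  have hnormwq : ∀ j : ℕ, ‖w * q ^ j‖ < 1 := by
    intro j
    rw [Real.norm_eq_abs, abs_mul, abs_pow, abs_of_pos hq0]
    nlinarith [hqpow1 j, pow_pos hq0 j]
  have hgeonorm : ∀ j : ℕ, Summable (fun i : ℕ => ‖(w * q ^ j) ^ i‖) := by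
    intro j
    simpa [norm_pow] using summable_geometric_of_lt_one (norm_nonneg (w * q ^ j)) (hnormwq j)
  -- value of G
  have hGval : ∀ k : ℕ, G k = (1 - q ^ (k + 1)) / (1 - q) := by
    intro k
    show ∑ j ∈ range (k + 1), q ^ j = _
    rw [geom_sum_eq (ne_of_lt hq1)]
    rw [div_eq_div_iff (by linarith) (by linarith)]
    ring
  have hGnonneg : ∀ k : ℕ, 0 ≤ G k := by
    intro k
    rw [hGval]
    have h1 := hqpow1 (k + 1)
    apply div_nonneg (by linarith) hp0.le
  have hGle : ∀ k : ℕ, G k ≤ 1 / (1 - q) := by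
    intro k
    rw [hGval]
    rw [div_le_div_iff_of_pos_right hp0]
    have := pow_pos hq0 (k + 1)
    linarith
  -- antidiagonal identity
  have hSanti : ∀ h k : ℕ,
      (∑ kl ∈ antidiagonal k, (w * q ^ h) ^ kl.1 * (w * q ^ (h + 1)) ^ kl.2)
        = w ^ k * q ^ (h * k) * G k := by
    intro h k
    rw [Finset.Nat.sum_antidiagonal_eq_sum_range_succ
      (fun i j => (w * q ^ h) ^ i * (w * q ^ (h + 1)) ^ j)]
    rw [← Finset.sum_range_reflect]
    have hrhs : w ^ k * q ^ (h * k) * G k = ∑ j ∈ range (k + 1), w ^ k * q ^ (h * k + j) := by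
      show _ * (∑ j ∈ range (k + 1), q ^ j) = _
      rw [Finset.mul_sum]
      exact Finset.sum_congr rfl fun j _ => by rw [pow_add]; ring
    rw [hrhs]
    apply Finset.sum_congr rfl
    intro j hj
    have hjk : j ≤ k := by simpa using Nat.lt_succ_iff.mp (Finset.mem_range.mp hj)
    have e0 : k + 1 - 1 - j = k - j := by omega
    have e1 : k - (k - j) = j := Nat.sub_sub_self hjk
    have e2 : k - j + j = k := Nat.sub_add_cancel hjk
    have e3 : h * (k - j) + (h + 1) * j = h * k + j := by
      conv_rhs => rw [← e2]
      ring
    rw [e0, e1, mul_pow, mul_pow, ← pow_mul, ← pow_mul]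
    calc w ^ (k - j) * q ^ (h * (k - j)) * (w ^ j * q ^ ((h + 1) * j))
        = w ^ (k - j) * w ^ j * (q ^ (h * (k - j)) * q ^ ((h + 1) * j)) := by ring
      _ = w ^ k * q ^ (h * k + j) := by rw [← pow_add, ← pow_add, e2, e3]
  -- per-h expansion
  have hsumS : ∀ h : ℕ, Summable (fun k : ℕ => w ^ k * q ^ (h * k) * G k) := by
    intro h
    have h1 := (summable_norm_sum_mul_antidiagonal_of_summable_norm
      (hgeonorm h) (hgeonorm (h + 1))).of_norm
    simp only [hSanti h] at h1
    exact h1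
  have husum : ∀ h : ℕ, Summable (fun k : ℕ => u h k) := fun h =>
    (hsumS h).mul_left (((h : ℝ) + 1) * w * q ^ (h + 1) * (w * q ^ (h + 1)) ^ m)
  have hth : ∀ h : ℕ,
      ((h + 1 : ℝ) * w * q ^ (h + 1) * (w * q ^ (h + 1)) ^ m) /
          ((1 - w * q ^ h) * (1 - w * q ^ (h + 1))) = ∑' k : ℕ, u h k := by
    intro h
    have e1 : (1 - w * q ^ h)⁻¹ = ∑' i : ℕ, (w * q ^ h) ^ i :=
      (tsum_geometric_of_norm_lt_one (hnormwq h)).symm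
    have e2 : (1 - w * q ^ (h + 1))⁻¹ = ∑' i : ℕ, (w * q ^ (h + 1)) ^ i :=
      (tsum_geometric_of_norm_lt_one (hnormwq (h + 1))).symm
    rw [div_eq_mul_inv, mul_inv, e1, e2,
      tsum_mul_tsum_eq_tsum_sum_antidiagonal_of_summable_norm (hgeonorm h) (hgeonorm (h + 1)),
      ← tsum_mul_left]
    exact tsum_congr fun k => by rw [hSanti h k]
  -- double-sum summability
  have hU : Summable (fun hk : ℕ × ℕ => u hk.1 hk.2) := by
    apply Summable.of_norm_bounded
        (g := fun hk : ℕ × ℕ =>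
          ((((hk.1 : ℝ)) + 1) * q ^ (hk.1 + 1)) * (|w| ^ hk.2 * (1 / (1 - q))))
    · exact (tck_aux1 q hq0 hq1).mul_of_nonneg
        ((summable_geometric_of_lt_one hw0 hw).mul_right _)
        (fun h => by positivity) (fun k => by positivity)
    · rintro ⟨h, k⟩
      have b1 := tck_absnum w q hw hq0 hq1 m h
      have b2 : |w ^ k * q ^ (h * k) * G k| ≤ |w| ^ k * (1 / (1 - q)) := by
        rw [abs_mul, abs_mul, abs_pow, abs_of_pos (pow_pos hq0 _), abs_of_nonneg (hGnonneg k)]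
        calc |w| ^ k * q ^ (h * k) * G k ≤ |w| ^ k * 1 * (1 / (1 - q)) := by
              gcongr <;> first | exact pow_nonneg hw0 k | exact hqpow1 (h * k) | exact hGle k
          _ = |w| ^ k * (1 / (1 - q)) := by ring
      show ‖_ * _‖ ≤ _
      rw [Real.norm_eq_abs, abs_mul]
      exact mul_le_mul b1 b2 (abs_nonneg _) (by positivity)
  -- inner sum over h
  have hxk : ∀ k : ℕ, ‖q ^ (m + 1 + k)‖ < 1 := by
    intro k
    rw [Real.norm_eq_abs, abs_of_pos (pow_pos hq0 _)]
    exact pow_lt_one₀ hq0.le hq1 (by omega)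
  have hxne : ∀ k : ℕ, (0:ℝ) < 1 - q ^ (m + 1 + k) := by
    intro k
    have := hxk k
    rw [Real.norm_eq_abs, abs_of_pos (pow_pos hq0 _)] at this
    linarith
  have hinner : ∀ k : ℕ, HasSum (fun h : ℕ => u h k)
      ((w ^ (m + 1 + k) * (G k * q ^ (m + 1))) *
        (q ^ (m + 1 + k) / (1 - q ^ (m + 1 + k)) ^ 2 + (1 - q ^ (m + 1 + k))⁻¹)) := by
    intro k
    have h1 := hasSum_coe_mul_geometric_of_norm_lt_one (hxk k)
    have h2 := hasSum_geometric_of_norm_lt_one (hxk k)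
    have h3 := (h1.add h2).mul_left (w ^ (m + 1 + k) * (G k * q ^ (m + 1)))
    have h4 : (fun h : ℕ => u h k) = fun h : ℕ =>
        (w ^ (m + 1 + k) * (G k * q ^ (m + 1))) *
          ((h : ℝ) * (q ^ (m + 1 + k)) ^ h + (q ^ (m + 1 + k)) ^ h) := by
      funext h
      show ((h : ℝ) + 1) * w * q ^ (h + 1) * (w * q ^ (h + 1)) ^ m *
          (w ^ k * q ^ (h * k) * G k) = _
      rw [mul_pow, ← pow_mul, ← pow_mul]
      ring
    rw [h4]
    exact h3
  have hksum : ∀ k : ℕ, Summable (fun h : ℕ => u h k) := fun k => (hinner k).summable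
  -- identification of the inner sum value with the coefficient
  have hinner_eq : ∀ k : ℕ, c (k + (m + 1)) * w ^ (k + (m + 1)) =
      (w ^ (m + 1 + k) * (G k * q ^ (m + 1))) *
        (q ^ (m + 1 + k) / (1 - q ^ (m + 1 + k)) ^ 2 + (1 - q ^ (m + 1 + k))⁻¹) := by
    intro k
    have hkm : k + (m + 1) = m + 1 + k := by omega
    show (if k + (m + 1) ≤ m then (0:ℝ) else _) * _ = _
    rw [if_neg (by omega), hkm, hGval]
    have h1 : (1:ℝ) - q ^ (m + 1 + k) ≠ 0 := (hxne k).ne'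
    have h2 : q ^ (m + 1 + k) = q ^ m * q * q ^ k := by
      rw [show m + 1 + k = m + 1 + k from rfl, pow_add, pow_add, pow_one]
    have h3 : q ^ (k + 1) = q ^ k * q := by rw [pow_add, pow_one]
    field_simp
    ring
  -- summability of the coefficient series
  have hsC : Summable (fun K : ℕ => c K * w ^ K) := by
    apply Summable.of_norm_bounded
        (g := fun K : ℕ => (q / ((1 - q) * (1 - q) ^ 2)) * |w| ^ K)
        ((summable_geometric_of_lt_one hw0 hw).mul_left _)
    intro K
    rw [Real.norm_eq_abs, abs_mul, abs_pow]
    apply mul_le_mul_of_nonneg_right ?_ (pow_nonneg hw0 K)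
    by_cases hKm : K ≤ m
    · show |(if K ≤ m then (0:ℝ) else _)| ≤ _
      rw [if_pos hKm, abs_zero]
      positivity
    · show |(if K ≤ m then (0:ℝ) else _)| ≤ _
      rw [if_neg hKm]
      push_neg at hKm
      have hK1 : 1 ≤ K := by omega
      have hqKm : q ^ K ≤ q ^ m := pow_le_pow_of_le_one hq0.le hq1.le (by omega)
      have hqK1 : q ^ K ≤ q := by simpa using pow_le_pow_of_le_one hq0.le hq1.le hK1
      have hnum : (0:ℝ) ≤ q * (q ^ m - q ^ K) := by
        apply mul_nonneg hq0.le (by linarith)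
      have hqK2 : (0:ℝ) < 1 - q ^ K := by linarith
      have hden : (0:ℝ) < (1 - q) * (1 - q ^ K) ^ 2 := mul_pos hp0 (pow_pos hqK2 2)
      rw [abs_of_nonneg (div_nonneg hnum hden.le)]
      apply div_le_div₀ hq0.le ?_ (by positivity) ?_
      · nlinarith [hqpow1 m, pow_pos hq0 K, hq0]
      · gcongr <;> linarith
  -- assemble
  have heq : (∑' K : ℕ, c K * w ^ K) =
      ∑' h : ℕ, ((h + 1 : ℝ) * w * q ^ (h + 1) * (w * q ^ (h + 1)) ^ m) /
        ((1 - w * q ^ h) * (1 - w * q ^ (h + 1))) := by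
    have hinjf : Function.Injective (fun k : ℕ => k + (m + 1)) := add_left_injective (m + 1)
    have e0 : Function.support (fun K : ℕ => c K * w ^ K) ⊆
        Set.range (fun k : ℕ => k + (m + 1)) := by
      intro K hK
      by_contra hcon
      apply hK
      have hKm : K ≤ m := by
        by_contra hcon2
        exact hcon ⟨K - (m + 1), by show K - (m + 1) + (m + 1) = K; omega⟩
      show (if K ≤ m then (0:ℝ) else _) * _ = 0
      rw [if_pos hKm, zero_mul]
    calc (∑' K : ℕ, c K * w ^ K)
        = ∑' k : ℕ, c (k + (m + 1)) * w ^ (k + (m + 1)) := (hinjf.tsum_eq e0).symm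
      _ = ∑' k : ℕ, ∑' h : ℕ, u h k :=
          tsum_congr fun k => by rw [hinner_eq k, ← (hinner k).tsum_eq]
      _ = ∑' h : ℕ, ∑' k : ℕ, u h k := Summable.tsum_comm' hU husum hksum
      _ = _ := (tsum_congr hth).symm
  have hfinal := hsC.hasSum
  rwa [heq] at hfinal

/-- For `0 < q < 1`, `p = 1 - q`, `0 ≤ m ≤ n`, `1 ≤ n`, the function
`g(w) = Σ_{h≥1} h·w·q^h·(w q^h)^m / ((1-w q^{h-1})(1-w q^h))` is well defined and
analytic for `|w| < 1`, and its `n`-th Taylor coefficient at `0` equals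
`(q/p)·(q^m - q^n)/(1-q^n)²`. -/
theorem taylor_coeff_value_kernel (q : ℝ) (hq0 : 0 < q) (hq1 : q < 1)
    (p : ℝ) (hp : p = 1 - q) (m n : ℕ) (hmn : m ≤ n) (hn : 1 ≤ n)
    (g : ℝ → ℝ)
    (hg : g = fun w : ℝ => ∑' h : ℕ,
      ((h + 1 : ℝ) * w * q ^ (h + 1) * (w * q ^ (h + 1)) ^ m) /
        ((1 - w * q ^ h) * (1 - w * q ^ (h + 1)))) :
    (∀ w : ℝ, |w| < 1 → Summable (fun h : ℕ =>
      ((h + 1 : ℝ) * w * q ^ (h + 1) * (w * q ^ (h + 1)) ^ m) /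
        ((1 - w * q ^ h) * (1 - w * q ^ (h + 1))))) ∧
    AnalyticOnNhd ℝ g {w : ℝ | |w| < 1} ∧
    iteratedDeriv n g 0 / n.factorial = (q / p) * (q ^ m - q ^ n) / (1 - q ^ n) ^ 2 := by
  subst hp
  have hp0 : (0:ℝ) < 1 - q := by linarith
  set c : ℕ → ℝ := fun K =>
    if K ≤ m then (0:ℝ) else q * (q ^ m - q ^ K) / ((1 - q) * (1 - q ^ K) ^ 2) with hc
  have hqpow1 : ∀ j : ℕ, q ^ j ≤ 1 := fun j => pow_le_one₀ hq0.le hq1.le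
  -- uniform bound on the coefficients
  have hcb : ∀ K : ℕ, |c K| ≤ q / ((1 - q) * (1 - q) ^ 2) := by
    intro K
    by_cases hKm : K ≤ m
    · show |if K ≤ m then (0:ℝ) else _| ≤ _
      rw [if_pos hKm, abs_zero]; positivity
    · show |if K ≤ m then (0:ℝ) else _| ≤ _
      rw [if_neg hKm]
      push_neg at hKm
      have hK1 : 1 ≤ K := by omega
      have hqKm : q ^ K ≤ q ^ m := pow_le_pow_of_le_one hq0.le hq1.le (by omega)
      have hqK1 : q ^ K ≤ q := by simpa using pow_le_pow_of_le_one hq0.le hq1.le hK1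
      have hnum : (0:ℝ) ≤ q * (q ^ m - q ^ K) := mul_nonneg hq0.le (by linarith)
      have hqK2 : (0:ℝ) < 1 - q ^ K := by linarith
      have hden : (0:ℝ) < (1 - q) * (1 - q ^ K) ^ 2 := mul_pos hp0 (pow_pos hqK2 2)
      rw [abs_of_nonneg (div_nonneg hnum hden.le)]
      apply div_le_div₀ hq0.le ?_ (by positivity) ?_
      · nlinarith [hqpow1 m, pow_pos hq0 K, hq0]
      · gcongr <;> linarith
  set P := FormalMultilinearSeries.ofScalars ℝ c with hP
  have hball : HasFPowerSeriesOnBall g P 0 1 := by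
    refine ⟨?_, by norm_num, ?_⟩
    · have hb := FormalMultilinearSeries.le_radius_of_bound P (q / ((1 - q) * (1 - q) ^ 2))
        (r := 1) ?_
      · simpa using hb
      · intro K
        rw [hP, FormalMultilinearSeries.ofScalars_norm]
        simpa [Real.norm_eq_abs] using hcb K
    · intro y hy
      rw [mem_emetric_ball_zero_iff] at hy
      have hy' : |y| < 1 := by
        have h0 : ‖y‖₊ < 1 := by rw [enorm_eq_nnnorm] at hy; exact_mod_cast hy
        rw [← Real.norm_eq_abs, ← coe_nnnorm]
        exact_mod_cast h0
      have h1 := tck_key q m y hq0 hq1 hy'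
      rw [hg]
      simp only [zero_add]
      convert h1 using 2 with K
      · rfl
      rw [hP, FormalMultilinearSeries.ofScalars_apply_eq, smul_eq_mul]
  refine ⟨fun w hw => tck_summable q hq0 hq1 m w hw, ?_, ?_⟩
  · intro w hw
    apply hball.analyticOnNhd
    rw [mem_emetric_ball_zero_iff]
    have : ‖w‖₊ < 1 := by
      rw [← NNReal.coe_lt_coe]
      rw [coe_nnnorm, Real.norm_eq_abs]
      exact hw
    rw [enorm_eq_nnnorm]
    exact_mod_cast this
  · have h1 := hball.factorial_smul (y := (1:ℝ)) n
    rw [hP, FormalMultilinearSeries.ofScalars_apply_eq] at h1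
    have h2 : iteratedDeriv n g 0 = (n.factorial : ℝ) * c n := by
      rw [iteratedDeriv_eq_iteratedFDeriv, ← h1]
      simp [smul_eq_mul]
    rw [h2]
    have hfac : (n.factorial : ℝ) ≠ 0 := Nat.cast_ne_zero.mpr n.factorial_ne_zero
    rw [mul_div_cancel_left₀ _ hfac]
    by_cases hnm : n ≤ m
    · have : n = m := le_antisymm hnm hmn
      subst this
      show (if n ≤ n then (0:ℝ) else _) = _
      rw [if_pos le_rfl, sub_self, mul_zero, zero_div]
    · show (if n ≤ m then (0:ℝ) else _) = _
      rw [if_neg hnm]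
      have hqn : (0:ℝ) < 1 - q ^ n := by
        have := pow_lt_one₀ hq0.le hq1 (by omega : n ≠ 0)
        linarith
      field_simp
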